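/- (Nested Pythagorean decomposition.) Let V ⊆ ℝ be an open interval, G : V → ℝ strictly convex and differentiable with derivative g = G′, and f the inverse of g. Fix N ∈ ℕ and for i = 1,…,N let δ_i ∈ {0,1}, q_i > 0, initial weights ω_i^{(0)} ∈ V, and calibration vectors z_i = (u_iᵀ, v_iᵀ)ᵀ ∈ ℝ^d with u_i ∈ ℝ^{d₁}. Let C = {ω : Σ_{i=1}^N δ_i ω_i z_i = Σ_{i=1}^N z_i} and C₁ = {ω : Σ_{i=1}^N δ_i ω_i u_i = Σ_{i=1}^N u_i}, so that C ⊆ C₁. Suppose ω̂ ∈ C has the dual form ω̂_i = f(g(ω_i^{(0)}) + q_i λ̂ᵀ z_i) for some λ̂ ∈ ℝ^d, and ω₁* ∈ C₁ has the dual form ω₁*_i = f(g(ω_i^{(0)}) + q_i μ̂ᵀ u_i) for some μ̂ ∈ ℝ^{d₁}. Then D̃_G(ω̂‖ω^{(0)}) = D̃_G(ω₁*‖ω^{(0)}) + D̃_G(ω̂‖ω₁*). -/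
import Mathlib


open Matrix Finset

/-- Nested Pythagorean decomposition: with `z_i = (u_iᵀ, v_iᵀ)ᵀ`,
`C ⊆ C₁` the full and reduced calibration constraint sets, and `ω̂ ∈ C`,
`ω₁* ∈ C₁` the dual-form Bregman projections, one has
`D̃(ω̂‖ω⁰) = D̃(ω₁*‖ω⁰) + D̃(ω̂‖ω₁*)`. -/
theorem stmt_10 (N d₁ d₂ : ℕ) (V : Set ℝ) (hVopen : IsOpen V) (hVconn : V.OrdConnected)
    (G g f : ℝ → ℝ) (hconv : StrictConvexOn ℝ V G)
    (hderiv : ∀ ω ∈ V, HasDerivAt G (g ω) ω)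
    (hfinv : ∀ ω ∈ V, f (g ω) = ω)
    (δ q ω0 : Fin N → ℝ) (hδ : ∀ i, δ i = 0 ∨ δ i = 1) (hq : ∀ i, 0 < q i)
    (hω0 : ∀ i, ω0 i ∈ V)
    (u : Fin N → Fin d₁ → ℝ) (v : Fin N → Fin d₂ → ℝ)
    (z : Fin N → (Fin d₁ ⊕ Fin d₂) → ℝ) (hz : ∀ i, z i = Sum.elim (u i) (v i))
    (D : ℝ → ℝ → ℝ) (hD : ∀ a b, D a b = G a - G b - g b * (a - b))
    (Dt : (Fin N → ℝ) → (Fin N → ℝ) → ℝ)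
    (hDt : ∀ ω ω' : Fin N → ℝ, Dt ω ω' = ∑ i, δ i * (q i)⁻¹ * D (ω i) (ω' i))
    (lam : (Fin d₁ ⊕ Fin d₂) → ℝ) (mu : Fin d₁ → ℝ)
    (hrange : ∀ i, δ i = 1 → ∃ ω ∈ V, g ω = g (ω0 i) + q i * (lam ⬝ᵥ z i))
    (ωhat : Fin N → ℝ)
    (hdual : ∀ i, δ i = 1 → ωhat i = f (g (ω0 i) + q i * (lam ⬝ᵥ z i)))
    (hcal : ∑ i, (δ i * ωhat i) • z i = ∑ i, z i)
    (hrange1 : ∀ i, δ i = 1 → ∃ ω ∈ V, g ω = g (ω0 i) + q i * (mu ⬝ᵥ u i))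
    (ω1 : Fin N → ℝ)
    (hdual1 : ∀ i, δ i = 1 → ω1 i = f (g (ω0 i) + q i * (mu ⬝ᵥ u i)))
    (hcal1 : ∑ i, (δ i * ω1 i) • u i = ∑ i, u i) :
    Dt ωhat ω0 = Dt ω1 ω0 + Dt ωhat ω1 := by
  have hg1 : ∀ i, δ i = 1 → g (ω1 i) = g (ω0 i) + q i * (mu ⬝ᵥ u i) := by
    intro i hi
    obtain ⟨ω, hωV, hgω⟩ := hrange1 i hi
    have hω1 : ω1 i = ω := by rw [hdual1 i hi, ← hgω, hfinv ω hωV]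
    rw [hω1, hgω]
  have hcalU : ∀ j, ∑ i, δ i * ωhat i * u i j = ∑ i, u i j := by
    intro j
    have := congrFun hcal (Sum.inl j)
    simpa [hz, Finset.sum_apply] using this
  have hcalU1 : ∀ j, ∑ i, δ i * ω1 i * u i j = ∑ i, u i j := by
    intro j
    have := congrFun hcal1 j
    simpa [Finset.sum_apply] using this
  have key : ∑ i, δ i * (mu ⬝ᵥ u i) * (ωhat i - ω1 i) = 0 := by
    calc ∑ i, δ i * (mu ⬝ᵥ u i) * (ωhat i - ω1 i)
        = ∑ i, ∑ j, (mu j * (δ i * ωhat i * u i j) - mu j * (δ i * ω1 i * u i j)) := by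
          refine Finset.sum_congr rfl fun i _ => ?_
          simp only [dotProduct, Finset.mul_sum, Finset.sum_mul]
          exact Finset.sum_congr rfl fun j _ => by ring
      _ = ∑ j, ∑ i, (mu j * (δ i * ωhat i * u i j) - mu j * (δ i * ω1 i * u i j)) :=
          Finset.sum_comm
      _ = 0 := by
          refine Finset.sum_eq_zero fun j _ => ?_
          rw [Finset.sum_sub_distrib, ← Finset.mul_sum, ← Finset.mul_sum, hcalU j,
            hcalU1 j, sub_self]
  have hterm : ∀ i, δ i * (q i)⁻¹ * D (ωhat i) (ω0 i)
      = (δ i * (q i)⁻¹ * D (ω1 i) (ω0 i) + δ i * (q i)⁻¹ * D (ωhat i) (ω1 i))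
        + δ i * (mu ⬝ᵥ u i) * (ωhat i - ω1 i) := by
    intro i
    rcases hδ i with h | h
    · simp [h]
    · have hg := hg1 i h
      simp only [hD, h, one_mul, hg]
      field_simp [(hq i).ne']
      ring
  rw [hDt, hDt, hDt, ← Finset.sum_add_distrib]
  calc ∑ i, δ i * (q i)⁻¹ * D (ωhat i) (ω0 i)
      = ∑ i, ((δ i * (q i)⁻¹ * D (ω1 i) (ω0 i) + δ i * (q i)⁻¹ * D (ωhat i) (ω1 i))
          + δ i * (mu ⬝ᵥ u i) * (ωhat i - ω1 i)) :=
        Finset.sum_congr rfl fun i _ => hterm i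
    _ = ∑ i, (δ i * (q i)⁻¹ * D (ω1 i) (ω0 i) + δ i * (q i)⁻¹ * D (ωhat i) (ω1 i)) := by
        rw [Finset.sum_add_distrib, key, add_zero]
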